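/- Fix k ≥ 1, m ≥ 1, a partition μ of k, a permutation w_μ ∈ S_k of cycle type μ, and an index i with 1 ≤ i ≤ m−1. Let G_μ(p_1,…,p_m; q_1,…,q_m) = Σ_{(α,β): α w_μ = β} p^{κ(α)} q^{κ(β)}, summed over all pairs of m-colored permutations α, β ∈ S_k^{(m)} with α w_μ = β, where p^{κ(α)} = Π_j p_j^{κ_j(α)} and κ_j(α) is the number of cycles of α colored j, and similarly for q^{κ(β)}. Then substituting q_{i+1} = q_i in G_μ yields G_μ(p_1,…,p_{i-1}, p_i + p_{i+1}, p_{i+2},…,p_m; q_1,…,q_{i-1}, q_i, q_{i+2},…,q_m), the same polynomial G for m−1 colors with p_i and p_{i+1} merged into p_i + p_{i+1} and q_{i+1} deleted. -/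

import Mathlib

open Equiv Finset

/-- `S_k^{(m)}`: the set of `m`-colored permutations of `{1,…,k}`, i.e. permutations
`u ∈ S_k` together with a color in `{1,…,m}` for each cycle of `u` (fixed points count
as cycles). We encode the coloring of cycles as a function on points that is constant
on each cycle of `u`. -/
abbrev ColoredPerm (k m : ℕ) :=
  {x : Equiv.Perm (Fin k) × (Fin k → Fin m) // ∀ a, x.2 (x.1 a) = x.2 a}

/-- `κ_j(α)`: the number of cycles of the colored permutation `α` colored `j`,
computed as the number of points that are minimal in their cycle and colored `j`. -/
noncomputable def kappaC {k m : ℕ} (j : Fin m) (α : ColoredPerm k m) : ℕ :=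
  Nat.card {x : Fin k // (∀ y, α.1.1.SameCycle x y → x ≤ y) ∧ α.1.2 x = j}

/-- The product `α v` of a colored permutation `α = (u, φ) ∈ S_k^{(m)}` with `v ∈ S_k`:
the underlying permutation is `w = u v`, and a cycle `τ` of `w` receives color
`max {φ(ρ) : ρ` a cycle of `u` meeting `τ}`. -/
def cmul {k m : ℕ} (α : ColoredPerm k m) (v : Equiv.Perm (Fin k)) : ColoredPerm k m :=
  ⟨(α.1.1 * v, fun x =>
      (Finset.univ.filter fun y => (α.1.1 * v).SameCycle x y).sup'
        ⟨x, by simp [Equiv.Perm.SameCycle.refl]⟩ α.1.2), by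
    intro a
    dsimp only
    refine Finset.sup'_congr _ ?_ fun _ _ => rfl
    apply Finset.filter_congr
    intro y _
    exact Equiv.Perm.sameCycle_apply_left⟩

/-- The generating function `G_μ(p₁,…,p_m;q₁,…,q_m) = ∑_{α w_μ = β} p^{κ(α)} q^{κ(β)}`,
summed over all pairs `(α,β) ∈ S_k^{(m)} × S_k^{(m)}` with `α w_μ = β` (equivalently,
over all `α`, with `β = α w_μ`), where `p^{κ(α)} = ∏_j p_j^{κ_j(α)}`. -/
noncomputable def Gfun (k m : ℕ) (w : Equiv.Perm (Fin k)) (p q : Fin m → ℤ) : ℤ :=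
  ∑ α : ColoredPerm k m,
    (∏ j : Fin m, p j ^ kappaC j α) * ∏ j : Fin m, q j ^ kappaC j (cmul α w)

section Aux

lemma color_sameCycle {k m : ℕ} (α : ColoredPerm k m) {x y : Fin k}
    (h : α.1.1.SameCycle x y) : α.1.2 x = α.1.2 y := by
  obtain ⟨n, -, rfl⟩ := h.exists_pow_eq'
  clear h
  induction n with
  | zero => simp
  | succ n ih => rw [pow_succ', Equiv.Perm.mul_apply, α.2]; exact ih

/-- the minimum point on the cycle of `x` -/
noncomputable def mcyc {k : ℕ} (u : Equiv.Perm (Fin k)) (x : Fin k) : Fin k :=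
  (univ.filter fun y => u.SameCycle x y).min'
    ⟨x, mem_filter.2 ⟨mem_univ x, Equiv.Perm.SameCycle.refl u x⟩⟩

lemma mcyc_spec {k : ℕ} (u : Equiv.Perm (Fin k)) (x : Fin k) : u.SameCycle x (mcyc u x) :=
  (mem_filter.1 (Finset.min'_mem _ _)).2

lemma mcyc_le {k : ℕ} {u : Equiv.Perm (Fin k)} {x y : Fin k} (h : u.SameCycle x y) :
    mcyc u x ≤ y :=
  Finset.min'_le _ _ (mem_filter.2 ⟨mem_univ y, h⟩)

lemma mcyc_eq_of_sameCycle {k : ℕ} {u : Equiv.Perm (Fin k)} {x y : Fin k}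
    (h : u.SameCycle x y) : mcyc u x = mcyc u y :=
  le_antisymm (mcyc_le (h.trans (mcyc_spec u y))) (mcyc_le (h.symm.trans (mcyc_spec u x)))

lemma mcyc_apply {k : ℕ} (u : Equiv.Perm (Fin k)) (a : Fin k) : mcyc u (u a) = mcyc u a :=
  mcyc_eq_of_sameCycle (Equiv.Perm.sameCycle_apply_left.2 (Equiv.Perm.SameCycle.refl u a))

lemma mcyc_eq_self {k : ℕ} {u : Equiv.Perm (Fin k)} {x : Fin k}
    (hx : ∀ y, u.SameCycle x y → x ≤ y) : mcyc u x = x :=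
  le_antisymm (mcyc_le (Equiv.Perm.SameCycle.refl u x)) (hx _ (mcyc_spec u x))

lemma mcyc_isMin {k : ℕ} (u : Equiv.Perm (Fin k)) (x : Fin k) :
    ∀ y, u.SameCycle (mcyc u x) y → mcyc u x ≤ y :=
  fun _ h => mcyc_le ((mcyc_spec u x).trans h)

lemma kappaC_card {k m : ℕ} (j : Fin m) (α : ColoredPerm k m) :
    kappaC j α
      = (univ.filter fun x => (∀ y, α.1.1.SameCycle x y → x ≤ y) ∧ α.1.2 x = j).card := by
  rw [kappaC, Nat.card_eq_fintype_card, Fintype.card_subtype]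

end Aux

section Merge

variable {m' : ℕ}

def mg (m' i : ℕ) (hi : i < m') : Fin (m' + 1) → Fin m' := fun j =>
  if h : j.val ≤ i then ⟨j.val, lt_of_le_of_lt h hi⟩
  else ⟨j.val - 1, by have := j.isLt; omega⟩

def sc (m' i : ℕ) : Fin m' → Fin (m' + 1) := fun j =>
  if j.val ≤ i then ⟨j.val, by have := j.isLt; omega⟩ else ⟨j.val + 1, by have := j.isLt; omega⟩

variable {i : ℕ}

lemma mg_val (hi : i < m') (j : Fin (m' + 1)) :
    (mg m' i hi j).val = if j.val ≤ i then j.val else j.val - 1 := by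
  unfold mg; split_ifs <;> rfl

lemma sc_val (j : Fin m') :
    (sc m' i j).val = if j.val ≤ i then j.val else j.val + 1 := by
  unfold sc; split_ifs <;> rfl

lemma mg_sc (hi : i < m') (j : Fin m') : mg m' i hi (sc m' i j) = j := by
  apply Fin.ext
  rw [mg_val, sc_val]
  split_ifs <;> omega

lemma sc_mg (hi : i < m') {j : Fin (m' + 1)} (h : j.val ≠ i + 1) :
    sc m' i (mg m' i hi j) = j := by
  apply Fin.ext
  rw [sc_val, mg_val]
  have := j.isLt
  split_ifs <;> omega

lemma sc_val_ne (j : Fin m') : (sc m' i j).val ≠ i + 1 := by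
  rw [sc_val]; have := j.isLt; split_ifs <;> omega

lemma sc_val_ne_i (hi : i < m') {j : Fin m'} (h : j ≠ ⟨i, hi⟩) : (sc m' i j).val ≠ i := by
  have hv : j.val ≠ i := fun hv => h (Fin.ext hv)
  rw [sc_val]; split_ifs <;> omega

lemma sc_i (hi : i < m') : sc m' i ⟨i, hi⟩ = ⟨i, by omega⟩ := by
  apply Fin.ext; rw [sc_val]; simp

lemma mg_iS (hi : i < m') : mg m' i hi ⟨i + 1, by omega⟩ = ⟨i, hi⟩ := by
  apply Fin.ext; rw [mg_val]; simp

lemma mg_mono (hi : i < m') : Monotone (mg m' i hi) := by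
  intro a b hab
  rw [Fin.le_def] at hab ⊢
  rw [mg_val, mg_val]
  split_ifs <;> omega

lemma sc_inj (hi : i < m') : Function.Injective (sc m' i) := fun a b hab => by
  rw [← mg_sc hi a, hab, mg_sc]

lemma mg_val_ne_of (hi : i < m') {j : Fin (m' + 1)} (h1 : j.val ≠ i) (h2 : j.val ≠ i + 1) :
    (mg m' i hi j).val ≠ i := by
  rw [mg_val]; have := j.isLt; split_ifs <;> omega

lemma prod_split_sc (hi : i < m') (f : Fin (m' + 1) → ℤ) :
    ∏ j : Fin (m' + 1), f j = f ⟨i + 1, by omega⟩ * ∏ j' : Fin m', f (sc m' i j') := by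
  have hnm : (⟨i + 1, by omega⟩ : Fin (m' + 1)) ∉ (univ : Finset (Fin m')).image (sc m' i) := by
    simp only [mem_image, mem_univ, true_and, not_exists]
    intro j' hj'
    exact sc_val_ne j' (by rw [hj'])
  have himg : (univ : Finset (Fin (m' + 1)))
      = insert ⟨i + 1, by omega⟩ ((univ : Finset (Fin m')).image (sc m' i)) := by
    ext j
    simp only [mem_univ, mem_insert, mem_image, true_and, true_iff]
    by_cases hj : j.val = i + 1
    · exact Or.inl (Fin.ext hj)
    · exact Or.inr ⟨mg m' i hi j, sc_mg hi hj⟩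
  rw [himg, Finset.prod_insert hnm,
    Finset.prod_image (fun a _ b _ hab => sc_inj hi hab)]

end Merge

section CMerge

variable {k m' i : ℕ}

def cmerge (hi : i < m') (α : ColoredPerm k (m' + 1)) : ColoredPerm k m' :=
  ⟨(α.1.1, fun x => mg m' i hi (α.1.2 x)), fun a => by dsimp only; rw [α.2 a]⟩

lemma cmerge_cmul (hi : i < m') (α : ColoredPerm k (m' + 1)) (w : Equiv.Perm (Fin k)) :
    cmerge hi (cmul α w) = cmul (cmerge hi α) w := by
  apply Subtype.ext
  apply Prod.ext
  · rfl
  · funext x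
    show mg m' i hi ((Finset.univ.filter fun y => (α.1.1 * w).SameCycle x y).sup'
        ⟨x, by simp [Equiv.Perm.SameCycle.refl]⟩ α.1.2) = _
    exact Finset.comp_sup'_eq_sup'_comp _ (mg m' i hi)
      (fun a b => (mg_mono hi).map_sup a b)

lemma kappa_cmerge (hi : i < m') (β : ColoredPerm k (m' + 1)) (j' : Fin m') :
    kappaC j' (cmerge hi β)
      = ∑ j ∈ univ.filter (fun j => mg m' i hi j = j'), kappaC j β := by
  simp only [kappaC_card]
  have : (univ.filter fun x =>
        (∀ y, (cmerge hi β).1.1.SameCycle x y → x ≤ y) ∧ (cmerge hi β).1.2 x = j')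
      = (univ.filter fun x =>
        (∀ y, β.1.1.SameCycle x y → x ≤ y) ∧ mg m' i hi (β.1.2 x) = j') := rfl
  rw [this, Finset.card_eq_sum_card_fiberwise
    (f := fun x => β.1.2 x) (t := univ.filter fun j => mg m' i hi j = j')
    (fun x hx => mem_filter.2 ⟨mem_univ _, (mem_filter.1 hx).2.2⟩)]
  apply Finset.sum_congr rfl
  intro j hj
  rw [filter_filter]
  congr 1
  ext x
  simp only [mem_filter, mem_univ, true_and] at hj ⊢
  constructor
  · rintro ⟨⟨h1, -⟩, h3⟩; exact ⟨h1, h3⟩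
  · rintro ⟨h1, h3⟩; exact ⟨⟨h1, by rw [h3, hj]⟩, h3⟩

lemma qprod (hi : i < m') (q : Fin (m' + 1) → ℤ)
    (hq : q ⟨i + 1, by omega⟩ = q ⟨i, by omega⟩) (β : ColoredPerm k (m' + 1)) :
    ∏ j : Fin (m' + 1), q j ^ kappaC j β
      = ∏ j' : Fin m', (q (sc m' i j')) ^ kappaC j' (cmerge hi β) := by
  have hqc : ∀ j : Fin (m' + 1), q (sc m' i (mg m' i hi j)) = q j := by
    intro j
    by_cases hj : j.val = i + 1
    · have h1 : j = ⟨i + 1, by omega⟩ := Fin.ext hj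
      rw [h1, mg_iS, sc_i, hq]
    · rw [sc_mg hi hj]
  calc ∏ j : Fin (m' + 1), q j ^ kappaC j β
      = ∏ j : Fin (m' + 1), q (sc m' i (mg m' i hi j)) ^ kappaC j β := by
        exact Finset.prod_congr rfl fun j _ => by rw [hqc]
    _ = ∏ j' : Fin m', ∏ j ∈ univ.filter (fun j => mg m' i hi j = j'),
          q (sc m' i (mg m' i hi j)) ^ kappaC j β :=
        (Finset.prod_fiberwise_of_maps_to (fun j _ => mem_univ _) _).symm
    _ = ∏ j' : Fin m', (q (sc m' i j')) ^ kappaC j' (cmerge hi β) := by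
        apply Finset.prod_congr rfl
        intro j' _
        rw [kappa_cmerge hi, ← Finset.prod_pow_eq_pow_sum]
        exact Finset.prod_congr rfl fun j hj => by
          rw [(mem_filter.1 hj).2]

end CMerge

section Lift

variable {k m' i : ℕ}

def Mset (hi : i < m') (α' : ColoredPerm k m') : Finset (Fin k) :=
  univ.filter fun x => (∀ y, α'.1.1.SameCycle x y → x ≤ y) ∧ α'.1.2 x = ⟨i, hi⟩

noncomputable def clift (hi : i < m') (α' : ColoredPerm k m') (T : Finset (Fin k)) :
    ColoredPerm k (m' + 1) :=
  ⟨(α'.1.1, fun x => if mcyc α'.1.1 x ∈ T then ⟨i + 1, by omega⟩ else sc m' i (α'.1.2 x)),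
   fun a => by dsimp only; rw [mcyc_apply, α'.2 a]⟩

lemma mem_Mset {hi : i < m'} {α' : ColoredPerm k m'} {x : Fin k} :
    x ∈ Mset hi α' ↔ (∀ y, α'.1.1.SameCycle x y → x ≤ y) ∧ α'.1.2 x = ⟨i, hi⟩ := by
  simp [Mset]

lemma cmerge_clift (hi : i < m') (α' : ColoredPerm k m') {T : Finset (Fin k)}
    (hT : T ⊆ Mset hi α') : cmerge hi (clift hi α' T) = α' := by
  apply Subtype.ext
  apply Prod.ext
  · rfl
  · funext x
    show mg m' i hi (if mcyc α'.1.1 x ∈ T then ⟨i + 1, by omega⟩ else sc m' i (α'.1.2 x))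
        = α'.1.2 x
    split_ifs with h
    · have hc : α'.1.2 (mcyc α'.1.1 x) = ⟨i, hi⟩ := (mem_Mset.1 (hT h)).2
      rw [mg_iS hi, ← hc, color_sameCycle α' (mcyc_spec α'.1.1 x)]
    · exact mg_sc hi _

lemma clift_Tof (hi : i < m') {α' : ColoredPerm k m'} {α : ColoredPerm k (m' + 1)}
    (h : cmerge hi α = α') :
    clift hi α' (univ.filter fun x =>
        (∀ y, α.1.1.SameCycle x y → x ≤ y) ∧ α.1.2 x = ⟨i + 1, by omega⟩) = α := by
  subst h
  apply Subtype.ext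
  apply Prod.ext
  · rfl
  · funext x
    show (if mcyc α.1.1 x ∈ _ then _ else sc m' i (mg m' i hi (α.1.2 x))) = α.1.2 x
    have hmem : mcyc α.1.1 x ∈ (univ.filter fun z =>
        (∀ y, α.1.1.SameCycle z y → z ≤ y) ∧ α.1.2 z = ⟨i + 1, by omega⟩)
        ↔ α.1.2 x = ⟨i + 1, by omega⟩ := by
      simp only [mem_filter, mem_univ, true_and]
      constructor
      · rintro ⟨-, hc⟩
        rw [color_sameCycle α (mcyc_spec α.1.1 x), hc]
      · intro hc
        exact ⟨mcyc_isMin α.1.1 x, by rw [← color_sameCycle α (mcyc_spec α.1.1 x), hc]⟩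
    by_cases hin : mcyc α.1.1 x ∈ (univ.filter fun z =>
        (∀ y, α.1.1.SameCycle z y → z ≤ y) ∧ α.1.2 z = ⟨i + 1, by omega⟩)
    · exact (if_pos hin).trans (hmem.1 hin).symm
    · have hne : (α.1.2 x).val ≠ i + 1 := by
        intro hv
        exact hin (hmem.2 (Fin.ext hv))
      exact (if_neg hin).trans (sc_mg hi hne)

lemma Tof_subset (hi : i < m') {α' : ColoredPerm k m'} {α : ColoredPerm k (m' + 1)}
    (h : cmerge hi α = α') :
    (univ.filter fun x =>
        (∀ y, α.1.1.SameCycle x y → x ≤ y) ∧ α.1.2 x = ⟨i + 1, by omega⟩) ⊆ Mset hi α' := by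
  subst h
  intro x hx
  rw [mem_filter] at hx
  rw [mem_Mset]
  refine ⟨hx.2.1, ?_⟩
  show mg m' i hi (α.1.2 x) = _
  rw [hx.2.2, mg_iS hi]

lemma Tof_clift (hi : i < m') (α' : ColoredPerm k m') {T : Finset (Fin k)}
    (hT : T ⊆ Mset hi α') :
    (univ.filter fun x => (∀ y, (clift hi α' T).1.1.SameCycle x y → x ≤ y)
        ∧ (clift hi α' T).1.2 x = ⟨i + 1, by omega⟩) = T := by
  ext x
  simp only [mem_filter, mem_univ, true_and]
  show (∀ y, α'.1.1.SameCycle x y → x ≤ y)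
      ∧ (if mcyc α'.1.1 x ∈ T then (⟨i + 1, by omega⟩ : Fin (m' + 1))
          else sc m' i (α'.1.2 x)) = ⟨i + 1, by omega⟩ ↔ x ∈ T
  constructor
  · rintro ⟨hmin, hc⟩
    rw [mcyc_eq_self hmin] at hc
    by_cases hx : x ∈ T
    · exact hx
    · rw [if_neg hx] at hc
      exact absurd (congrArg Fin.val hc) (sc_val_ne _)
  · intro hx
    have hmin := (mem_Mset.1 (hT hx)).1
    rw [mcyc_eq_self hmin, if_pos hx]
    exact ⟨hmin, rfl⟩

end Lift

section Kappa

variable {k m' i : ℕ}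

lemma kappa_clift_iS (hi : i < m') (α' : ColoredPerm k m') {T : Finset (Fin k)}
    (hT : T ⊆ Mset hi α') :
    kappaC ⟨i + 1, by omega⟩ (clift hi α' T) = T.card := by
  rw [kappaC_card, Tof_clift hi α' hT]

lemma kappa_clift_iF (hi : i < m') (α' : ColoredPerm k m') {T : Finset (Fin k)}
    (hT : T ⊆ Mset hi α') :
    kappaC ⟨i, by omega⟩ (clift hi α' T) = (Mset hi α').card - T.card := by
  rw [kappaC_card, ← Finset.card_sdiff_of_subset hT]
  congr 1
  ext x
  rw [Finset.mem_sdiff, mem_Mset]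
  simp only [mem_filter, mem_univ, true_and]
  show (∀ y, α'.1.1.SameCycle x y → x ≤ y)
      ∧ (if mcyc α'.1.1 x ∈ T then (⟨i + 1, by omega⟩ : Fin (m' + 1))
          else sc m' i (α'.1.2 x)) = ⟨i, by omega⟩
    ↔ ((∀ y, α'.1.1.SameCycle x y → x ≤ y) ∧ α'.1.2 x = ⟨i, hi⟩) ∧ x ∉ T
  constructor
  · rintro ⟨hmin, hc⟩
    rw [mcyc_eq_self hmin] at hc
    by_cases hx : x ∈ T
    · rw [if_pos hx] at hc
      exact absurd (congrArg Fin.val hc) (by simp)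
    · rw [if_neg hx] at hc
      refine ⟨⟨hmin, ?_⟩, hx⟩
      have := congrArg Fin.val hc
      rw [sc_val] at this
      apply Fin.ext
      simp only [Fin.val_mk] at this ⊢
      split_ifs at this <;> omega
  · rintro ⟨⟨hmin, hc⟩, hx⟩
    rw [mcyc_eq_self hmin, if_neg hx, hc]
    exact ⟨hmin, by rw [sc_i hi]⟩

lemma kappa_clift_other (hi : i < m') (α' : ColoredPerm k m') {T : Finset (Fin k)}
    (hT : T ⊆ Mset hi α') {j : Fin (m' + 1)} (h1 : j.val ≠ i) (h2 : j.val ≠ i + 1) :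
    kappaC j (clift hi α' T) = kappaC (mg m' i hi j) α' := by
  rw [kappaC_card, kappaC_card]
  congr 1
  ext x
  simp only [mem_filter, mem_univ, true_and]
  show (∀ y, α'.1.1.SameCycle x y → x ≤ y)
      ∧ (if mcyc α'.1.1 x ∈ T then (⟨i + 1, by omega⟩ : Fin (m' + 1))
          else sc m' i (α'.1.2 x)) = j
    ↔ (∀ y, α'.1.1.SameCycle x y → x ≤ y) ∧ α'.1.2 x = mg m' i hi j
  constructor
  · rintro ⟨hmin, hc⟩
    refine ⟨hmin, ?_⟩
    by_cases hx : mcyc α'.1.1 x ∈ T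
    · rw [if_pos hx] at hc
      exact absurd (congrArg Fin.val hc).symm h2
    · rw [if_neg hx] at hc
      rw [← hc, mg_sc hi]
  · rintro ⟨hmin, hc⟩
    refine ⟨hmin, ?_⟩
    have hx : mcyc α'.1.1 x ∉ T := by
      intro hx
      have hcm : α'.1.2 (mcyc α'.1.1 x) = ⟨i, hi⟩ := (mem_Mset.1 (hT hx)).2
      rw [← color_sameCycle α' (mcyc_spec α'.1.1 x), hc] at hcm
      exact mg_val_ne_of hi h1 h2 (congrArg Fin.val hcm)
    rw [if_neg hx, hc, sc_mg hi h2]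

lemma pprod_clift (hi : i < m') (α' : ColoredPerm k m') {T : Finset (Fin k)}
    (hT : T ⊆ Mset hi α') (p : Fin (m' + 1) → ℤ) :
    ∏ j : Fin (m' + 1), p j ^ kappaC j (clift hi α' T)
      = (p ⟨i + 1, by omega⟩ ^ T.card * p ⟨i, by omega⟩ ^ ((Mset hi α').card - T.card))
        * ∏ j' ∈ (univ : Finset (Fin m')).erase ⟨i, hi⟩,
            p (sc m' i j') ^ kappaC j' α' := by
  rw [prod_split_sc hi, kappa_clift_iS hi α' hT]
  rw [← Finset.mul_prod_erase univ
    (fun j' => p (sc m' i j') ^ kappaC (sc m' i j') (clift hi α' T))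
    (mem_univ (⟨i, hi⟩ : Fin m'))]
  rw [mul_assoc]
  congr 1
  congr 1
  · rw [sc_i hi, kappa_clift_iF hi α' hT]
  · apply Finset.prod_congr rfl
    intro j' hj'
    have hj'i : j' ≠ ⟨i, hi⟩ := (Finset.mem_erase.1 hj').1
    rw [kappa_clift_other hi α' hT (sc_val_ne_i hi hj'i) (sc_val_ne j'), mg_sc hi]

end Kappa

section FiberSum

variable {k m' i : ℕ}

lemma sc_eq_castSucc {j : Fin m'} (h : j.val ≤ i) : sc m' i j = j.castSucc := by
  apply Fin.ext; rw [sc_val, if_pos h]; simp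

lemma sc_eq_succ {j : Fin m'} (h : ¬ j.val ≤ i) : sc m' i j = j.succ := by
  apply Fin.ext; rw [sc_val, if_neg h]; simp

lemma binom (hi : i < m') (α' : ColoredPerm k m') (p : Fin (m' + 1) → ℤ) :
    ∑ T ∈ (Mset hi α').powerset,
        p ⟨i + 1, by omega⟩ ^ T.card * p ⟨i, by omega⟩ ^ ((Mset hi α').card - T.card)
      = (p ⟨i, by omega⟩ + p ⟨i + 1, by omega⟩) ^ kappaC ⟨i, hi⟩ α' := by
  have hM : (Mset hi α').card = kappaC ⟨i, hi⟩ α' := by rw [kappaC_card]; rfl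
  have hpa := Finset.prod_add (fun _ : Fin k => p ⟨i + 1, by omega⟩)
    (fun _ : Fin k => p ⟨i, by omega⟩) (Mset hi α')
  rw [Finset.prod_const] at hpa
  rw [← hM, add_comm (p ⟨i, by omega⟩) (p ⟨i + 1, by omega⟩), hpa]
  apply Finset.sum_congr rfl
  intro T hT
  rw [Finset.prod_const, Finset.prod_const, Finset.card_sdiff_of_subset (Finset.mem_powerset.1 hT)]

lemma fiber_sum (hi : i < m') (α' : ColoredPerm k m') (p : Fin (m' + 1) → ℤ) :
    ∑ α ∈ (univ : Finset (ColoredPerm k (m' + 1))).filter (fun α => cmerge hi α = α'),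
        ∏ j : Fin (m' + 1), p j ^ kappaC j α
      = (p ⟨i, by omega⟩ + p ⟨i + 1, by omega⟩) ^ kappaC ⟨i, hi⟩ α'
        * ∏ j' ∈ (univ : Finset (Fin m')).erase ⟨i, hi⟩,
            p (sc m' i j') ^ kappaC j' α' := by
  have step : ∑ α ∈ (univ : Finset (ColoredPerm k (m' + 1))).filter
        (fun α => cmerge hi α = α'), ∏ j : Fin (m' + 1), p j ^ kappaC j α
      = ∑ T ∈ (Mset hi α').powerset, ∏ j : Fin (m' + 1), p j ^ kappaC j (clift hi α' T) := by
    apply Finset.sum_nbij' (i := fun α => univ.filter fun x =>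
        (∀ y, α.1.1.SameCycle x y → x ≤ y) ∧ α.1.2 x = ⟨i + 1, by omega⟩)
      (j := clift hi α')
    · intro α hα
      exact Finset.mem_powerset.2 (Tof_subset hi ((mem_filter.1 hα).2))
    · intro T hT
      exact mem_filter.2 ⟨mem_univ _, cmerge_clift hi α' (Finset.mem_powerset.1 hT)⟩
    · intro α hα
      exact clift_Tof hi ((mem_filter.1 hα).2)
    · intro T hT
      exact Tof_clift hi α' (Finset.mem_powerset.1 hT)
    · intro α hα
      rw [clift_Tof hi ((mem_filter.1 hα).2)]
  rw [step]
  calc ∑ T ∈ (Mset hi α').powerset, ∏ j : Fin (m' + 1), p j ^ kappaC j (clift hi α' T)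
      = ∑ T ∈ (Mset hi α').powerset,
          (p ⟨i + 1, by omega⟩ ^ T.card * p ⟨i, by omega⟩ ^ ((Mset hi α').card - T.card))
          * ∏ j' ∈ (univ : Finset (Fin m')).erase ⟨i, hi⟩,
              p (sc m' i j') ^ kappaC j' α' :=
        Finset.sum_congr rfl fun T hT => pprod_clift hi α' (Finset.mem_powerset.1 hT) p
    _ = _ := by rw [← Finset.sum_mul, binom hi α' p]

end FiberSum

/-- Proposition 2. Substituting `q_{i+1} = q_i` in
`G_μ(p₁,…,p_m;q₁,…,q_m)` (with `m = m'+1` colors) yields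
`G_μ(p₁,…,p_{i-1},p_i+p_{i+1},p_{i+2},…,p_m; q₁,…,q_{i-1},q_i,q_{i+2},…,q_m)`
(with `m'` colors). Here indices are `0`-based: `i` ranges over `0 ≤ i < m'`. -/
theorem stmt4 (k m' : ℕ) (hk : 1 ≤ k) (mu : Nat.Partition k)
    (w : Equiv.Perm (Fin k)) (hw : w.cycleType = mu.parts.filter (fun a => 2 ≤ a))
    (i : ℕ) (hi : i < m') (p q : Fin (m' + 1) → ℤ)
    (hq : q ⟨i + 1, by omega⟩ = q ⟨i, by omega⟩) :
    Gfun k (m' + 1) w p q =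
      Gfun k m' w
        (fun j => if j.val < i then p j.castSucc
          else if j.val = i then p j.castSucc + p j.succ else p j.succ)
        (fun j => if j.val ≤ i then q j.castSucc else q j.succ) := by
  unfold Gfun
  have hqs : ∀ j' : Fin m', q (sc m' i j')
      = (fun j : Fin m' => if j.val ≤ i then q j.castSucc else q j.succ) j' := by
    intro j'
    by_cases h : j'.val ≤ i
    · simp only [if_pos h, sc_eq_castSucc h]
    · simp only [if_neg h, sc_eq_succ h]
  calc ∑ α : ColoredPerm k (m' + 1),
        (∏ j, p j ^ kappaC j α) * ∏ j, q j ^ kappaC j (cmul α w)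
      = ∑ α : ColoredPerm k (m' + 1),
          (∏ j, p j ^ kappaC j α)
            * ∏ j' : Fin m', q (sc m' i j') ^ kappaC j' (cmul (cmerge hi α) w) := by
        refine Finset.sum_congr rfl fun α _ => ?_
        rw [qprod hi q hq (cmul α w), cmerge_cmul hi α w]
    _ = ∑ α' : ColoredPerm k m',
          ∑ α ∈ (univ : Finset (ColoredPerm k (m' + 1))).filter (fun α => cmerge hi α = α'),
            (∏ j, p j ^ kappaC j α)
              * ∏ j' : Fin m', q (sc m' i j') ^ kappaC j' (cmul (cmerge hi α) w) :=
        (Finset.sum_fiberwise_of_maps_to (fun α _ => mem_univ _) _).symm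
    _ = ∑ α' : ColoredPerm k m',
          ((p ⟨i, by omega⟩ + p ⟨i + 1, by omega⟩) ^ kappaC ⟨i, hi⟩ α'
              * ∏ j' ∈ (univ : Finset (Fin m')).erase ⟨i, hi⟩,
                  p (sc m' i j') ^ kappaC j' α')
            * ∏ j' : Fin m', q (sc m' i j') ^ kappaC j' (cmul α' w) := by
        refine Finset.sum_congr rfl fun α' _ => ?_
        rw [← fiber_sum hi α' p, Finset.sum_mul]
        refine Finset.sum_congr rfl fun α hα => ?_
        rw [(mem_filter.1 hα).2]
    _ = _ := by
        refine Finset.sum_congr rfl fun α' _ => ?_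
        congr 1
        · rw [← Finset.mul_prod_erase univ
            (fun j' : Fin m' => (if j'.val < i then p j'.castSucc
              else if j'.val = i then p j'.castSucc + p j'.succ else p j'.succ)
                ^ kappaC j' α')
            (mem_univ (⟨i, hi⟩ : Fin m'))]
          congr 1
          · congr 1
            simp only [Fin.val_mk, lt_irrefl, if_false, if_pos rfl, Fin.castSucc_mk,
              Fin.succ_mk, if_true]
          · refine Finset.prod_congr rfl fun j' hj' => ?_
            have hne : j'.val ≠ i := fun hv => (Finset.mem_erase.1 hj').1 (Fin.ext hv)
            congr 1
            by_cases h : j'.val < i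
            · rw [if_pos h, sc_eq_castSucc (le_of_lt h)]
            · rw [if_neg h, if_neg hne, sc_eq_succ (by omega)]
        · exact Finset.prod_congr rfl fun j' _ => by rw [hqs j']
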